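/- Let A be a real matrix that is block diagonal with 2×2 rotation blocks θ(a₁t₀), ..., θ(aₙt₀) (possibly preceded by an identity block). If A is conjugate over ℝ to an integer matrix, then A has finite order; moreover its order equals lcm of the orders of the rotation blocks. -/

import Mathlib

open Real Matrix

/-- The rotation matrix by angle `t`. -/
noncomputable def rot (t : ℝ) : Matrix (Fin 2) (Fin 2) ℝ :=
  !![Real.cos t, Real.sin t; -Real.sin t, Real.cos t]

lemma rot_zero : rot 0 = 1 := by
  simp [rot, Matrix.one_fin_two]

lemma rot_mul (t u : ℝ) : rot t * rot u = rot (t + u) := by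
  ext i j
  fin_cases i <;> fin_cases j <;>
    simp [rot, Matrix.mul_apply, Fin.sum_univ_two, Real.cos_add, Real.sin_add] <;> ring

lemma rot_pow (t : ℝ) (k : ℕ) : rot t ^ k = rot (k * t) := by
  induction k with
  | zero => simp [rot_zero]
  | succ k ih => rw [pow_succ, ih, rot_mul]; push_cast; ring_nf

lemma rot_entry_abs_le (t : ℝ) (i j : Fin 2) : |rot t i j| ≤ 1 := by
  fin_cases i <;> fin_cases j <;>
    simp [rot, abs_cos_le_one, abs_sin_le_one]

lemma fromBlocks_one_pow {l m α : Type*} [Fintype l] [Fintype m] [DecidableEq l]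
    [DecidableEq m] [CommRing α] (D : Matrix m m α) (k : ℕ) :
    Matrix.fromBlocks (1 : Matrix l l α) 0 0 D ^ k = Matrix.fromBlocks 1 0 0 (D ^ k) := by
  induction k with
  | zero => simp [Matrix.fromBlocks_one]
  | succ k ih => rw [pow_succ, ih, Matrix.fromBlocks_multiply, pow_succ]; simp

theorem blockdiag_rot_conj_int_finite_order (s n : ℕ) (a : Fin n → ℝ) (t₀ : ℝ)
    (A : Matrix (Fin s ⊕ Fin 2 × Fin n) (Fin s ⊕ Fin 2 × Fin n) ℝ)
    (hA : A = Matrix.fromBlocks 1 0 0 (Matrix.blockDiagonal fun i => rot (a i * t₀)))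
    (hconj : ∃ P : Matrix (Fin s ⊕ Fin 2 × Fin n) (Fin s ⊕ Fin 2 × Fin n) ℝ, IsUnit P ∧
      ∃ E : Matrix (Fin s ⊕ Fin 2 × Fin n) (Fin s ⊕ Fin 2 × Fin n) ℤ,
        P⁻¹ * A * P = E.map (Int.cast : ℤ → ℝ)) :
    IsOfFinOrder A ∧ orderOf A = Finset.univ.lcm (fun i => orderOf (rot (a i * t₀))) := by
  obtain ⟨P, hP, E, hE⟩ := hconj
  -- A is a unit
  have hApow : ∀ k : ℕ, A ^ k =
      Matrix.fromBlocks 1 0 0 (Matrix.blockDiagonal fun i => rot (a i * t₀) ^ k) := by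
    intro k
    rw [hA, fromBlocks_one_pow, ← Matrix.blockDiagonal_pow]
    rfl
  have hAunit : IsUnit A := by
    have h2 : (Matrix.blockDiagonal fun i => rot (a i * t₀)) *
        (Matrix.blockDiagonal fun i => rot (-(a i * t₀))) = 1 := by
      rw [← Matrix.blockDiagonal_one, ← Matrix.blockDiagonal_mul]
      exact congrArg Matrix.blockDiagonal (funext fun i => by
        show rot _ * rot _ = 1
        rw [rot_mul, add_neg_cancel, rot_zero])
    have h1 : A * (Matrix.fromBlocks 1 0 0
        (Matrix.blockDiagonal fun i => rot (-(a i * t₀)))) = 1 := by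
      rw [hA, Matrix.fromBlocks_multiply]
      simp only [Matrix.one_mul, Matrix.mul_one, Matrix.zero_mul, Matrix.mul_zero,
        add_zero, zero_add, h2, Matrix.fromBlocks_one]
    refine (Matrix.isUnit_iff_isUnit_det A).mpr (IsUnit.of_mul_eq_one
      ((Matrix.fromBlocks (1 : Matrix (Fin s) (Fin s) ℝ) 0 0
        (Matrix.blockDiagonal fun i => rot (-(a i * t₀)))).det) ?_)
    rw [← Matrix.det_mul, h1, Matrix.det_one]
  -- entries of A ^ k are bounded by 1
  have hAk_bdd : ∀ (k : ℕ) (i j : Fin s ⊕ Fin 2 × Fin n), |(A ^ k) i j| ≤ 1 := by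
    intro k i j
    rw [hApow k]
    rcases i with i | ⟨i1, i2⟩ <;> rcases j with j | ⟨j1, j2⟩
    · simp only [Matrix.fromBlocks_apply₁₁, Matrix.one_apply]
      split <;> norm_num
    · simp
    · simp
    · simp only [Matrix.fromBlocks_apply₂₂, Matrix.blockDiagonal_apply]
      split
      · rename_i h
        subst h
        rw [rot_pow]
        exact rot_entry_abs_le _ _ _
      · norm_num
  -- conjugation formula for powers
  have hPdet : IsUnit P.det := (Matrix.isUnit_iff_isUnit_det P).mp hP
  have hconjpow : ∀ k : ℕ, (E.map (Int.cast : ℤ → ℝ)) ^ k = P⁻¹ * A ^ k * P := by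
    intro k
    rw [← hE]
    induction k with
    | zero => simp [Matrix.nonsing_inv_mul P hPdet]
    | succ k ih =>
        rw [pow_succ, ih, pow_succ]
        calc P⁻¹ * A ^ k * P * (P⁻¹ * A * P)
            = P⁻¹ * A ^ k * (P * P⁻¹) * A * P := by
              simp only [Matrix.mul_assoc]
          _ = P⁻¹ * (A ^ k * A) * P := by
              rw [Matrix.mul_nonsing_inv P hPdet]
              simp only [Matrix.mul_assoc, Matrix.mul_one]
          _ = _ := rfl
  -- entries of E ^ k are bounded
  set C : ℝ := (∑ x, ∑ y, |P⁻¹ x y|) * (∑ x, ∑ y, |P x y|) with hC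
  have hmap : ∀ m : ℕ, (E ^ m).map (Int.cast : ℤ → ℝ) = (E.map (Int.cast : ℤ → ℝ)) ^ m := by
    intro m
    simpa [RingHom.mapMatrix_apply] using map_pow ((Int.castRingHom ℝ).mapMatrix) E m
  have hEk_bdd : ∀ (k : ℕ) (i j : Fin s ⊕ Fin 2 × Fin n), |((E ^ k) i j : ℝ)| ≤ C := by
    intro k i j
    have h2 : (((E ^ k) i j : ℤ) : ℝ) = (P⁻¹ * A ^ k * P) i j := by
      rw [← hconjpow k, ← hmap k]; rfl
    rw [h2]
    have hb : |(P⁻¹ * A ^ k * P) i j| ≤ ∑ x, ∑ y, |P⁻¹ i y| * |(A ^ k) y x| * |P x j| := by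
      rw [Matrix.mul_apply]
      refine (Finset.abs_sum_le_sum_abs _ _).trans (Finset.sum_le_sum fun x _ => ?_)
      rw [Matrix.mul_apply, Finset.sum_mul]
      refine (Finset.abs_sum_le_sum_abs _ _).trans (Finset.sum_le_sum fun y _ => ?_)
      rw [abs_mul, abs_mul]
    refine hb.trans ?_
    have step : ∀ x y, |P⁻¹ i y| * |(A ^ k) y x| * |P x j| ≤ |P⁻¹ i y| * |P x j| := by
      intro x y
      have h3 := mul_le_mul_of_nonneg_right
        (mul_le_mul_of_nonneg_left (hAk_bdd k y x) (abs_nonneg (P⁻¹ i y)))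
        (abs_nonneg (P x j))
      simpa using h3
    refine (Finset.sum_le_sum fun x _ => Finset.sum_le_sum fun y _ => step x y).trans ?_
    have hsum : (∑ x, ∑ y, |P⁻¹ i y| * |P x j|) = (∑ y, |P⁻¹ i y|) * (∑ x, |P x j|) := by
      calc (∑ x, ∑ y, |P⁻¹ i y| * |P x j|)
          = ∑ x, (∑ y, |P⁻¹ i y|) * |P x j| := by
            refine Finset.sum_congr rfl fun x _ => ?_
            rw [← Finset.sum_mul]
        _ = (∑ y, |P⁻¹ i y|) * ∑ x, |P x j| := by rw [← Finset.mul_sum]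
    rw [hsum, hC]
    have hle1 : (∑ y, |P⁻¹ i y|) ≤ ∑ x, ∑ y, |P⁻¹ x y| :=
      Finset.single_le_sum (f := fun x => ∑ y, |P⁻¹ x y|)
        (fun x _ => Finset.sum_nonneg fun y _ => abs_nonneg _) (Finset.mem_univ i)
    have hle2 : (∑ x, |P x j|) ≤ ∑ x, ∑ y, |P x y| :=
      Finset.sum_le_sum fun x _ => Finset.single_le_sum (f := fun z => |P x z|)
        (fun z _ => abs_nonneg _) (Finset.mem_univ j)
    exact mul_le_mul hle1 hle2 (Finset.sum_nonneg fun x _ => abs_nonneg _)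
      (Finset.sum_nonneg fun x _ => Finset.sum_nonneg fun y _ => abs_nonneg _)
  -- pigeonhole: powers of E form a finite set
  have hCnonneg : 0 ≤ C := by
    apply mul_nonneg <;>
      exact Finset.sum_nonneg fun x _ => Finset.sum_nonneg fun y _ => abs_nonneg _
  set N : ℤ := ⌈C⌉ with hN
  have hT : (Set.univ.pi fun _ : Fin s ⊕ Fin 2 × Fin n =>
      Set.univ.pi fun _ : Fin s ⊕ Fin 2 × Fin n => Set.Icc (-N) N).Finite :=
    Set.Finite.pi fun _ => Set.Finite.pi fun _ => Set.finite_Icc _ _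
  have hmem : ∀ k : ℕ, (E ^ k : Matrix _ _ ℤ) ∈ (Set.univ.pi fun _ =>
      Set.univ.pi fun _ => Set.Icc (-N) N) := by
    intro k
    intro i _
    intro j _
    have h := hEk_bdd k i j
    have : |(E ^ k) i j| ≤ N := by
      have h6 : ((|(E ^ k) i j| : ℤ) : ℝ) ≤ (N : ℝ) := by
        rw [Int.cast_abs]; exact h.trans (Int.le_ceil C)
      exact_mod_cast h6
    exact Set.mem_Icc.mpr (abs_le.mp this)
  obtain ⟨j, -, k, -, hjk, hEjk⟩ :=
    Set.infinite_univ.exists_ne_map_eq_of_mapsTo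
      (f := fun k : ℕ => (E ^ k : Matrix _ _ ℤ)) (fun k _ => hmem k) hT
  -- from E^j = E^k deduce A^j = A^k
  have hAjk : A ^ j = A ^ k := by
    have h1 : (E.map (Int.cast : ℤ → ℝ)) ^ j = (E.map (Int.cast : ℤ → ℝ)) ^ k := by
      rw [← hmap, ← hmap, hEjk]
    rw [hconjpow, hconjpow] at h1
    calc A ^ j = P * (P⁻¹ * A ^ j * P) * P⁻¹ := by
          rw [Matrix.mul_assoc, Matrix.mul_assoc, Matrix.mul_nonsing_inv P hPdet,
            Matrix.mul_one, ← Matrix.mul_assoc, Matrix.mul_nonsing_inv P hPdet,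
            Matrix.one_mul]
      _ = P * (P⁻¹ * A ^ k * P) * P⁻¹ := by rw [h1]
      _ = A ^ k := by
          rw [Matrix.mul_assoc, Matrix.mul_assoc, Matrix.mul_nonsing_inv P hPdet,
            Matrix.mul_one, ← Matrix.mul_assoc, Matrix.mul_nonsing_inv P hPdet,
            Matrix.one_mul]
  -- hence a positive power of A equals 1
  have hfin : IsOfFinOrder A := by
    rcases hjk.lt_or_gt with h | h
    · refine isOfFinOrder_iff_pow_eq_one.mpr ⟨k - j, by omega, ?_⟩
      have : A ^ j * A ^ (k - j) = A ^ j * 1 := by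
        rw [mul_one, ← pow_add, Nat.add_sub_cancel' h.le, hAjk]
      exact (hAunit.pow j).mul_left_cancel this
    · refine isOfFinOrder_iff_pow_eq_one.mpr ⟨j - k, by omega, ?_⟩
      have : A ^ k * A ^ (j - k) = A ^ k * 1 := by
        rw [mul_one, ← pow_add, Nat.add_sub_cancel' h.le, ← hAjk]
      exact (hAunit.pow k).mul_left_cancel this
  -- characterize A^k = 1
  have hiff : ∀ m : ℕ, A ^ m = 1 ↔ ∀ i, rot (a i * t₀) ^ m = 1 := by
    intro m
    rw [hApow m]
    constructor
    · intro h i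
      have hD : Matrix.blockDiagonal (fun i => rot (a i * t₀) ^ m) =
          Matrix.blockDiagonal (1 : Fin n → Matrix (Fin 2) (Fin 2) ℝ) := by
        rw [Matrix.blockDiagonal_one]
        ext x y
        have h4 := congrFun (congrFun h (Sum.inr x)) (Sum.inr y)
        simp only [Matrix.fromBlocks_apply₂₂] at h4
        rw [h4]
        simp [Matrix.one_apply, Sum.inr.injEq]
      exact congrFun (Matrix.blockDiagonal_injective hD) i
    · intro h
      have h5 : (fun i => rot (a i * t₀) ^ m) = (1 : Fin n → Matrix (Fin 2) (Fin 2) ℝ) :=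
        funext h
      rw [h5, Matrix.blockDiagonal_one, Matrix.fromBlocks_one]
  refine ⟨hfin, ?_⟩
  apply Nat.dvd_antisymm
  · apply orderOf_dvd_iff_pow_eq_one.mpr
    rw [hiff]
    intro i
    exact orderOf_dvd_iff_pow_eq_one.mp
      (Finset.dvd_lcm (Finset.mem_univ i))
  · apply Finset.lcm_dvd
    intro i _
    apply orderOf_dvd_iff_pow_eq_one.mpr
    exact (hiff (orderOf A)).mp (pow_orderOf_eq_one A) i
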